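/- Let L, T ∈ (0,∞), p ∈ [2,∞), 𝔅 ∈ [1,∞), (m_k)_{k∈ℕ} ⊆ ℕ with lim inf_j m_j = ∞, lim sup_j (m_j)^{p/2}/j < ∞, and m_{k+1} ≤ 𝔅 m_k for all k. For ε ∈ (0,1] let N_ε = inf{n ∈ ℕ : [(1+LT)(m_n)^{-1/2} exp((m_n)^{p/2}/n)]^n ≤ ε}. Then N_ε < ∞ for all ε ∈ (0,1], and for every δ > 0, sup_{ε∈(0,1]} ε^{2+δ} (N_ε)^{1/2} (3 m_{N_ε})^{N_ε} < ∞. -/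

import Mathlib

set_option maxHeartbeats 1000000


open Filter

theorem stmt_12 (L T p 𝔅 : ℝ) (hL : 0 < L) (hT : 0 < T) (hp : 2 ≤ p) (h𝔅 : 1 ≤ 𝔅)
    (m : ℕ → ℕ) (hm1 : ∀ k, 1 ≤ m k)
    (hliminf : Tendsto (fun j => (m j : ℝ)) atTop atTop)
    (hlimsup : IsBoundedUnder (· ≤ ·) atTop (fun j => (m j : ℝ) ^ (p / 2) / (j : ℝ)))
    (hgrow : ∀ k, (m (k + 1) : ℝ) ≤ 𝔅 * m k)
    (N : ℝ → ℕ)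
    (hN : ∀ ε ∈ Set.Ioc (0 : ℝ) 1,
      N ε = sInf {n : ℕ | 1 ≤ n ∧
        ((1 + L * T) * (m n : ℝ) ^ (-(1 : ℝ) / 2) *
            Real.exp ((m n : ℝ) ^ (p / 2) / (n : ℝ))) ^ n ≤ ε}) :
    (∀ ε ∈ Set.Ioc (0 : ℝ) 1,
      {n : ℕ | 1 ≤ n ∧
        ((1 + L * T) * (m n : ℝ) ^ (-(1 : ℝ) / 2) *
            Real.exp ((m n : ℝ) ^ (p / 2) / (n : ℝ))) ^ n ≤ ε}.Nonempty) ∧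
    (∀ δ : ℝ, 0 < δ → ∃ C : ℝ, ∀ ε ∈ Set.Ioc (0 : ℝ) 1,
      ε ^ (2 + δ) * (N ε : ℝ) ^ ((1 : ℝ) / 2) * (3 * (m (N ε) : ℝ)) ^ (N ε) ≤ C) := by
  classical
  -- basic positivity facts
  have hm0 : ∀ k, (0:ℝ) < (m k : ℝ) := fun k => by
    exact_mod_cast Nat.lt_of_lt_of_le Nat.zero_lt_one (hm1 k)
  have hLT : (1:ℝ) ≤ 1 + L * T := by nlinarith
  -- bound on the exponential factor
  obtain ⟨c₀, hc₀⟩ := hlimsup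
  rw [Filter.eventually_map, Filter.eventually_atTop] at hc₀
  obtain ⟨J, hJ⟩ := hc₀
  set c : ℝ := max c₀ 0 with hc_def
  have hc0 : (0:ℝ) ≤ c := le_max_right _ _
  set K : ℝ := (1 + L * T) * Real.exp c with hK_def
  have hK1 : (1:ℝ) ≤ K := by
    have h1 : (1:ℝ) ≤ Real.exp c := Real.one_le_exp hc0
    nlinarith
  have hK0 : (0:ℝ) < K := lt_of_lt_of_le one_pos hK1
  -- base quantity
  set B : ℕ → ℝ := fun n => (1 + L * T) * (m n : ℝ) ^ (-(1 : ℝ) / 2) *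
      Real.exp ((m n : ℝ) ^ (p / 2) / (n : ℝ)) with hB_def
  have hB0 : ∀ n, 0 < B n := fun n => by
    have := hm0 n
    positivity
  have hBle : ∀ n, J ≤ n → B n ≤ K * (m n : ℝ) ^ (-(1 : ℝ) / 2) := by
    intro n hn
    have hexp : Real.exp ((m n : ℝ) ^ (p / 2) / (n : ℝ)) ≤ Real.exp c :=
      Real.exp_le_exp.mpr (le_trans (hJ n hn) (le_max_left _ _))
    have hpos : (0:ℝ) < (1 + L * T) * (m n : ℝ) ^ (-(1 : ℝ) / 2) := by
      have := hm0 n; positivity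
    calc B n ≤ (1 + L * T) * (m n : ℝ) ^ (-(1 : ℝ) / 2) * Real.exp c :=
          mul_le_mul_of_nonneg_left hexp hpos.le
      _ = K * (m n : ℝ) ^ (-(1 : ℝ) / 2) := by rw [hK_def]; ring
  -- Part 1 : the sets are nonempty
  have hne : ∀ ε ∈ Set.Ioc (0 : ℝ) 1,
      {n : ℕ | 1 ≤ n ∧ ((1 + L * T) * (m n : ℝ) ^ (-(1 : ℝ) / 2) *
          Real.exp ((m n : ℝ) ^ (p / 2) / (n : ℝ))) ^ n ≤ ε}.Nonempty := by
    intro ε hε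
    obtain ⟨hε0, hε1⟩ := hε
    obtain ⟨J2, hJ2⟩ := Filter.eventually_atTop.mp (hliminf.eventually_ge_atTop ((K/ε)^2))
    refine ⟨max (max J 1) J2, ?_, ?_⟩
    · exact le_trans (le_max_right J 1) (le_max_left _ _)
    · set n := max (max J 1) J2 with hn_def
      have hnJ : J ≤ n := le_trans (le_max_left J 1) (le_max_left _ _)
      have hn1 : 1 ≤ n := le_trans (le_max_right J 1) (le_max_left _ _)
      have hμ : (K/ε)^2 ≤ (m n : ℝ) := hJ2 n (le_max_right _ _)
      have hKε : (0:ℝ) < K / ε := div_pos hK0 hε0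
      have hroot : K / ε ≤ (m n : ℝ) ^ ((1:ℝ)/2) := by
        have h1 : ((K/ε)^2 : ℝ) ^ ((1:ℝ)/2) ≤ (m n : ℝ) ^ ((1:ℝ)/2) :=
          Real.rpow_le_rpow (by positivity) hμ (by norm_num)
        calc K / ε = ((K/ε)^2 : ℝ) ^ ((1:ℝ)/2) := by
              rw [← Real.rpow_natCast (K/ε) 2, ← Real.rpow_mul hKε.le]
              norm_num
          _ ≤ _ := h1
      have hinv : (m n : ℝ) ^ (-(1 : ℝ) / 2) ≤ ε / K := by
        have h2 : (m n : ℝ) ^ (-(1 : ℝ) / 2) = ((m n : ℝ) ^ ((1:ℝ)/2))⁻¹ := by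
          rw [show -(1:ℝ)/2 = -((1:ℝ)/2) by norm_num, Real.rpow_neg (hm0 n).le]
        rw [h2, show ε / K = (K/ε)⁻¹ by rw [inv_div]]
        exact inv_anti₀ hKε hroot
      have hBn : B n ≤ ε := by
        calc B n ≤ K * (m n : ℝ) ^ (-(1 : ℝ) / 2) := hBle n hnJ
          _ ≤ K * (ε / K) := mul_le_mul_of_nonneg_left hinv hK0.le
          _ = ε := by field_simp
      calc (B n) ^ n ≤ ε ^ n := pow_le_pow_left₀ (hB0 n).le hBn n
        _ ≤ ε ^ 1 := pow_le_pow_of_le_one hε0.le hε1 hn1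
        _ = ε := pow_one ε
  refine ⟨hne, ?_⟩
  -- Part 2
  intro δ hδ
  set A : ℝ := 2 * (3 * 𝔅) * K ^ ((2:ℝ) + δ) with hA_def
  have hKδ : (1:ℝ) ≤ K ^ ((2:ℝ) + δ) := Real.one_le_rpow hK1 (by linarith)
  have hA1 : (1:ℝ) ≤ A := by nlinarith
  have hA0 : (0:ℝ) < A := lt_of_lt_of_le one_pos hA1
  set R : ℝ := A ^ ((4:ℝ)/δ) with hR_def
  have hR1 : (1:ℝ) ≤ R := Real.one_le_rpow hA1 (by positivity)
  obtain ⟨M1, hM1⟩ := Filter.eventually_atTop.mp (hliminf.eventually_ge_atTop R)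
  set M : ℕ := max (max J M1) ⌈(4:ℝ)/δ⌉₊ with hM_def
  have hMδ : (4:ℝ)/δ ≤ (M:ℝ) := le_trans (Nat.le_ceil _) (Nat.cast_le.mpr (le_max_right _ _))
  -- the master function F
  set F : ℕ → ℝ := fun k => ((k+1 : ℕ) : ℝ) ^ ((1:ℝ)/2) * (3 * (m (k+1) : ℝ)) ^ (k+1) *
      (B k) ^ ((k:ℝ) * (2 + δ)) with hF_def
  -- tail bound : F k ≤ A for k ≥ M
  have htail : ∀ k, M ≤ k → F k ≤ A := by
    intro k hk
    have hkJ : J ≤ k := le_trans (le_trans (le_max_left J M1) (le_max_left _ _)) hk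
    have hkM1 : M1 ≤ k := le_trans (le_trans (le_max_right J M1) (le_max_left _ _)) hk
    have hkδ : (4:ℝ)/δ ≤ (k:ℝ) := le_trans hMδ (Nat.cast_le.mpr hk)
    set μ : ℝ := (m k : ℝ) with hμ_def
    have hμ0 : (0:ℝ) < μ := hm0 k
    have hμR : R ≤ μ := hM1 k hkM1
    have hμ1 : (1:ℝ) ≤ μ := le_trans hR1 hμR
    have hw0 : (0:ℝ) ≤ (k:ℝ) * (2 + δ) := by positivity
    -- step bounds
    have b2 : (B k) ^ ((k:ℝ) * (2 + δ)) ≤ (K * μ ^ (-(1 : ℝ) / 2)) ^ ((k:ℝ) * (2 + δ)) :=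
      Real.rpow_le_rpow (hB0 k).le (hBle k hkJ) hw0
    have b4 : (3 * (m (k+1) : ℝ)) ^ (k+1) ≤ ((3 * 𝔅) * μ) ^ (k+1) := by
      apply pow_le_pow_left₀ (by positivity)
      have := hgrow k
      nlinarith
    have b6 : ((k+1 : ℕ) : ℝ) ^ ((1:ℝ)/2) ≤ (2:ℝ) ^ (k+1) := by
      have h1 : ((k+1 : ℕ) : ℝ) ^ ((1:ℝ)/2) ≤ ((k+1 : ℕ) : ℝ) := by
        calc ((k+1 : ℕ) : ℝ) ^ ((1:ℝ)/2) ≤ ((k+1 : ℕ) : ℝ) ^ ((1:ℝ)) :=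
              Real.rpow_le_rpow_of_exponent_le (by exact_mod_cast Nat.one_le_iff_ne_zero.mpr (by omega)) (by norm_num)
          _ = _ := Real.rpow_one _
      have h2 : ((k+1 : ℕ) : ℝ) ≤ (2:ℝ) ^ (k+1) := by
        exact_mod_cast (Nat.lt_two_pow_self (n := k+1)).le
      linarith
    have step1 : F k ≤ (2:ℝ) ^ (k+1) * ((3 * 𝔅) * μ) ^ (k+1) *
        (K * μ ^ (-(1 : ℝ) / 2)) ^ ((k:ℝ) * (2 + δ)) := by
      simp only [hF_def]
      gcongr ?_ * ?_ * ?_ <;> first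
        | exact b6
        | exact b4
        | exact b2
    -- rewrite RHS
    have e1 : (K * μ ^ (-(1 : ℝ) / 2)) ^ ((k:ℝ) * (2 + δ)) =
        K ^ ((k:ℝ) * (2 + δ)) * μ ^ ((-(1 : ℝ) / 2) * ((k:ℝ) * (2 + δ))) := by
      rw [Real.mul_rpow hK0.le (Real.rpow_nonneg hμ0.le _), ← Real.rpow_mul hμ0.le]
    have e2 : ((3 * 𝔅) * μ) ^ (k+1) = (3 * 𝔅) ^ (k+1) * μ ^ (k+1) := mul_pow _ _ _
    have key : F k ≤ ((2:ℝ) ^ (k+1) * (3 * 𝔅) ^ (k+1) * K ^ ((k:ℝ) * (2 + δ))) *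
        μ ^ ((1:ℝ) - (k:ℝ) * δ / 2) := by
      calc F k ≤ (2:ℝ) ^ (k+1) * ((3 * 𝔅) * μ) ^ (k+1) *
            (K * μ ^ (-(1 : ℝ) / 2)) ^ ((k:ℝ) * (2 + δ)) := step1
        _ = ((2:ℝ) ^ (k+1) * (3 * 𝔅) ^ (k+1) * K ^ ((k:ℝ) * (2 + δ))) *
            (μ ^ (((k+1:ℕ)) : ℝ) * μ ^ ((-(1 : ℝ) / 2) * ((k:ℝ) * (2 + δ)))) := by
            rw [e1, e2, ← Real.rpow_natCast μ (k+1)]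
            ring
        _ = ((2:ℝ) ^ (k+1) * (3 * 𝔅) ^ (k+1) * K ^ ((k:ℝ) * (2 + δ))) *
            μ ^ (((((k+1:ℕ)) : ℝ)) + ((-(1 : ℝ) / 2) * ((k:ℝ) * (2 + δ)))) := by
            rw [← Real.rpow_add hμ0]
        _ = _ := by
            rw [show ((((k+1:ℕ)) : ℝ)) + ((-(1 : ℝ) / 2) * ((k:ℝ) * (2 + δ))) =
              (1:ℝ) - (k:ℝ) * δ / 2 from by push_cast; ring]
    -- bound the K-part by A^(k+1)
    have f1 : (2:ℝ) ^ (k+1) * (3 * 𝔅) ^ (k+1) * K ^ ((k:ℝ) * (2 + δ)) ≤ A ^ (k+1) := by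
      have hKle : K ^ ((k:ℝ) * (2 + δ)) ≤ K ^ (((2:ℝ) + δ) * ((k+1:ℕ):ℝ)) := by
        apply Real.rpow_le_rpow_of_exponent_le hK1
        push_cast
        nlinarith [Nat.cast_nonneg (α := ℝ) k]
      have hApow : A ^ (k+1) = (2:ℝ) ^ (k+1) * (3 * 𝔅) ^ (k+1) *
          K ^ (((2:ℝ) + δ) * ((k+1:ℕ):ℝ)) := by
        rw [hA_def, mul_pow, mul_pow, Real.rpow_mul hK0.le, Real.rpow_natCast]
      rw [hApow]
      have h2 : (0:ℝ) ≤ (2:ℝ) ^ (k+1) * (3 * 𝔅) ^ (k+1) := by positivity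
      exact mul_le_mul_of_nonneg_left hKle h2
    -- bound the μ-part
    have hexp_nonpos : (1:ℝ) - (k:ℝ) * δ / 2 ≤ 0 := by
      have : (4:ℝ) ≤ (k:ℝ) * δ := by
        have := (div_le_iff₀ hδ).mp hkδ
        linarith
      linarith
    have f2 : μ ^ ((1:ℝ) - (k:ℝ) * δ / 2) ≤ R ^ ((1:ℝ) - (k:ℝ) * δ / 2) := by
      have hR0 : (0:ℝ) < R := lt_of_lt_of_le one_pos hR1
      exact Real.rpow_le_rpow_of_nonpos hR0 hμR hexp_nonpos
    have f3 : A ^ (k+1) * R ^ ((1:ℝ) - (k:ℝ) * δ / 2) ≤ A := by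
      have e3 : A ^ (k+1) * R ^ ((1:ℝ) - (k:ℝ) * δ / 2) =
          A ^ ((((k+1:ℕ)):ℝ) + ((4:ℝ)/δ) * ((1:ℝ) - (k:ℝ) * δ / 2)) := by
        rw [hR_def, ← Real.rpow_mul hA0.le, Real.rpow_add hA0, Real.rpow_natCast]
      rw [e3]
      have e4 : (((k+1:ℕ)):ℝ) + ((4:ℝ)/δ) * ((1:ℝ) - (k:ℝ) * δ / 2) ≤ 1 := by
        have hδ0 : δ ≠ 0 := ne_of_gt hδ
        have : ((4:ℝ)/δ) * ((1:ℝ) - (k:ℝ) * δ / 2) = 4/δ - 2 * (k:ℝ) := by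
          field_simp
          ring
        rw [this]
        push_cast
        linarith
      calc A ^ ((((k+1:ℕ)):ℝ) + ((4:ℝ)/δ) * ((1:ℝ) - (k:ℝ) * δ / 2)) ≤ A ^ (1:ℝ) :=
            Real.rpow_le_rpow_of_exponent_le hA1 e4
        _ = A := Real.rpow_one A
    calc F k ≤ ((2:ℝ) ^ (k+1) * (3 * 𝔅) ^ (k+1) * K ^ ((k:ℝ) * (2 + δ))) *
          μ ^ ((1:ℝ) - (k:ℝ) * δ / 2) := key
      _ ≤ A ^ (k+1) * R ^ ((1:ℝ) - (k:ℝ) * δ / 2) := by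
          apply mul_le_mul f1 f2 (by positivity) (by positivity)
      _ ≤ A := f3
  -- bound F on the initial segment
  obtain ⟨C0, hC0⟩ := Finset.exists_le ((Finset.range (M+1)).image F)
  have hFbd : ∀ k, F k ≤ max A C0 := by
    intro k
    rcases le_or_gt M k with hk | hk
    · exact le_trans (htail k hk) (le_max_left _ _)
    · refine le_trans (hC0 (F k) ?_) (le_max_right _ _)
      exact Finset.mem_image_of_mem F (Finset.mem_range.mpr (by omega))
  refine ⟨max (max A C0) (3 * (m 1 : ℝ)), ?_⟩
  intro ε hε
  obtain ⟨hε0, hε1⟩ := hε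
  have hNε := hN ε ⟨hε0, hε1⟩
  have hmem : N ε ∈ {n : ℕ | 1 ≤ n ∧ (B n) ^ n ≤ ε} := by
    rw [hNε]
    exact Nat.sInf_mem (hne ε ⟨hε0, hε1⟩)
  have hNε1 : 1 ≤ N ε := hmem.1
  have hεpow : ε ^ ((2:ℝ) + δ) ≤ 1 := Real.rpow_le_one hε0.le hε1 (by linarith)
  rcases eq_or_lt_of_le hNε1 with h1 | h2
  · -- N ε = 1
    rw [← h1]
    have : ε ^ ((2:ℝ) + δ) * ((1:ℕ) : ℝ) ^ ((1:ℝ)/2) * (3 * (m 1 : ℝ)) ^ (1:ℕ) ≤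
        3 * (m 1 : ℝ) := by
      rw [Nat.cast_one, Real.one_rpow, pow_one, mul_one]
      have h3 : (0:ℝ) ≤ 3 * (m 1 : ℝ) := by positivity
      nlinarith [hεpow, Real.rpow_nonneg hε0.le ((2:ℝ)+δ)]
    exact le_trans this (le_max_right _ _)
  · -- N ε ≥ 2
    set k := N ε - 1 with hk_def
    have hkn : k + 1 = N ε := by omega
    have hk1 : 1 ≤ k := by omega
    have hknot : k ∉ {n : ℕ | 1 ≤ n ∧ (B n) ^ n ≤ ε} := by
      intro hmem'
      have : N ε ≤ k := by rw [hNε]; exact Nat.sInf_le hmem'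
      omega
    have hεlt : ε < (B k) ^ k := by
      by_contra hcon
      exact hknot ⟨hk1, not_lt.mp hcon⟩
    have hε2 : ε ^ ((2:ℝ) + δ) ≤ (B k) ^ ((k:ℝ) * (2 + δ)) := by
      calc ε ^ ((2:ℝ) + δ) ≤ ((B k) ^ k) ^ ((2:ℝ) + δ) :=
            Real.rpow_le_rpow hε0.le hεlt.le (by linarith)
        _ = (B k) ^ ((k:ℝ) * (2 + δ)) := by
            rw [← Real.rpow_natCast (B k) k, ← Real.rpow_mul (hB0 k).le]
    calc ε ^ (2 + δ) * (N ε : ℝ) ^ ((1:ℝ)/2) * (3 * (m (N ε) : ℝ)) ^ (N ε)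
        = ((N ε : ℝ) ^ ((1:ℝ)/2) * (3 * (m (N ε) : ℝ)) ^ (N ε)) * ε ^ ((2:ℝ) + δ) := by
          ring
      _ ≤ ((N ε : ℝ) ^ ((1:ℝ)/2) * (3 * (m (N ε) : ℝ)) ^ (N ε)) *
          (B k) ^ ((k:ℝ) * (2 + δ)) := by
          apply mul_le_mul_of_nonneg_left hε2 (by positivity)
      _ = F k := by simp only [hF_def, hkn]
      _ ≤ max A C0 := hFbd k
      _ ≤ _ := le_max_left _ _
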